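/- Let 1/m₁²(1, m₁a₁−1) and 1/m₂²(1, m₂a₂−1) be Wahl singularities with Hirzebruch–Jung expansions [e₁,…,e_{s₁}] = m₁²/(m₁a₁−1) and [f₁,…,f_{s₂}] = m₂²/(m₂a₂−1). Suppose δ := m₁a₂ + m₂a₁ − m₁m₂ > 0, and set Δ = m₁² + m₂² − δm₁m₂ and Ω = (m₂ − δm₁)(m₂ − a₂) + m₁a₁ − 1. Then, whenever the continued fraction [f_{s₂},…,f₁, 1, e₁,…,e_{s₁}] is well defined, it equals Δ/Ω as a rational number. -/

import Mathlib

/-- Hirzebruch–Jung continued fraction `[b i, b (i+1), …, b (i+n-1)]` (`n` terms):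
`hjCF b i n = b i - 1/(b (i+1) - 1/(⋯ - 1/(b (i+n-1))))`, with the conventions
`hjCF b i 0 = 0` and `(0 : ℚ)⁻¹ = 0`. -/
def hjCF (b : ℕ → ℤ) : ℕ → ℕ → ℚ
  | _, 0 => 0
  | i, n + 1 => (b i : ℚ) - (hjCF b (i + 1) n)⁻¹

/-- The continued fraction `[b i, …, b (i+n-1)]` is well defined:
no partial denominator vanishes. -/
def hjWD (b : ℕ → ℤ) : ℕ → ℕ → Prop
  | _, 0 => True
  | i, n + 1 => (n = 0 ∨ hjCF b (i + 1) n ≠ 0) ∧ hjWD b (i + 1) n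

/-- The sequence `x 0 = x0`, `x 1 = x1`, `x (i+1) = b i * x i - x (i-1)` for `i ≥ 1`. -/
def rec2 (x0 x1 : ℤ) (b : ℕ → ℤ) : ℕ → ℤ
  | 0 => x0
  | 1 => x1
  | i + 2 => b (i + 1) * rec2 x0 x1 b (i + 1) - rec2 x0 x1 b i

/-! ### Auxiliary 2×2 integer matrices for continuants -/

structure M2 where
  a : ℤ
  b : ℤ
  c : ℤ
  d : ℤ

namespace M2

def mul (A B : M2) : M2 :=
  ⟨A.a * B.a + A.b * B.c, A.a * B.b + A.b * B.d,
   A.c * B.a + A.d * B.c, A.c * B.b + A.d * B.d⟩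

def rev (A : M2) : M2 := ⟨A.a, -A.c, -A.b, A.d⟩

@[simp] lemma mul_a (A B : M2) : (A.mul B).a = A.a * B.a + A.b * B.c := rfl
@[simp] lemma mul_b (A B : M2) : (A.mul B).b = A.a * B.b + A.b * B.d := rfl
@[simp] lemma mul_c (A B : M2) : (A.mul B).c = A.c * B.a + A.d * B.c := rfl
@[simp] lemma mul_d (A B : M2) : (A.mul B).d = A.c * B.b + A.d * B.d := rfl
@[simp] lemma rev_a (A : M2) : A.rev.a = A.a := rfl
@[simp] lemma rev_b (A : M2) : A.rev.b = -A.c := rfl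
@[simp] lemma rev_c (A : M2) : A.rev.c = -A.b := rfl
@[simp] lemma rev_d (A : M2) : A.rev.d = A.d := rfl

end M2

def I2 : M2 := ⟨1, 0, 0, 1⟩
def mOf (x : ℤ) : M2 := ⟨x, -1, 1, 0⟩

@[simp] lemma mOf_a (x : ℤ) : (mOf x).a = x := rfl
@[simp] lemma mOf_b (x : ℤ) : (mOf x).b = -1 := rfl
@[simp] lemma mOf_c (x : ℤ) : (mOf x).c = 1 := rfl
@[simp] lemma mOf_d (x : ℤ) : (mOf x).d = 0 := rfl

lemma M2.mul_I2 (A : M2) : A.mul I2 = A := by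
  cases A; simp [M2.mul, I2]

lemma M2.I2_mul (A : M2) : I2.mul A = A := by
  cases A; simp [M2.mul, I2]

lemma M2.mul_assoc' (A B C : M2) : (A.mul B).mul C = A.mul (B.mul C) := by
  cases A; cases B; cases C
  simp only [M2.mul, M2.mk.injEq]
  refine ⟨by ring, by ring, by ring, by ring⟩

lemma M2.rev_mul (A B : M2) : (A.mul B).rev = (B.rev).mul (A.rev) := by
  cases A; cases B
  simp only [M2.mul, M2.rev, M2.mk.injEq]
  refine ⟨by ring, by ring, by ring, by ring⟩

lemma M2.rev_I2 : I2.rev = I2 := by simp [M2.rev, I2]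

lemma M2.rev_mOf (x : ℤ) : (mOf x).rev = mOf x := by simp [M2.rev, mOf]

/-- `mP b i n` is the product `M(b i) ⋯ M(b (i+n-1))` where `M(x) = [[x,-1],[1,0]]`. -/
def mP (b : ℕ → ℤ) : ℕ → ℕ → M2
  | _, 0 => I2
  | i, n + 1 => (mOf (b i)).mul (mP b (i + 1) n)

lemma mP_succ (b : ℕ → ℤ) : ∀ n i, mP b i (n + 1) = (mP b i n).mul (mOf (b (i + n))) := by
  intro n
  induction n with
  | zero =>
    intro i
    simp [mP, M2.mul_I2, M2.I2_mul]
  | succ n ih =>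
    intro i
    have h1 : i + 1 + n = i + (n + 1) := by omega
    calc mP b i (n + 2) = (mOf (b i)).mul (mP b (i + 1) (n + 1)) := rfl
      _ = (mOf (b i)).mul ((mP b (i + 1) n).mul (mOf (b (i + 1 + n)))) := by rw [ih]
      _ = ((mOf (b i)).mul (mP b (i + 1) n)).mul (mOf (b (i + (n + 1)))) := by
          rw [M2.mul_assoc', h1]
      _ = (mP b i (n + 1)).mul (mOf (b (i + (n + 1)))) := rfl

lemma mP_add (b : ℕ → ℤ) : ∀ m n i, mP b i (m + n) = (mP b i m).mul (mP b (i + m) n) := by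
  intro m
  induction m with
  | zero => intro n i; simp [mP, M2.I2_mul]
  | succ m ih =>
    intro n i
    have h1 : m + 1 + n = (m + n) + 1 := by omega
    have h2 : i + 1 + m = i + (m + 1) := by omega
    rw [h1]
    show (mOf (b i)).mul (mP b (i + 1) (m + n)) = _
    rw [ih, ← M2.mul_assoc', h2]
    rfl

lemma mP_congr (b c : ℕ → ℤ) : ∀ n i k, (∀ j, j < n → b (i + j) = c (k + j)) →
    mP b i n = mP c k n := by
  intro n
  induction n with
  | zero => intros; rfl
  | succ n ih =>
    intro i k h
    show (mOf (b i)).mul _ = (mOf (c k)).mul _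
    have h0 : b i = c k := by simpa using h 0 (by omega)
    rw [h0, ih (i + 1) (k + 1) (fun j hj => by
      have := h (j + 1) (by omega)
      simpa [show i + (j + 1) = i + 1 + j from by omega,
        show k + (j + 1) = k + 1 + j from by omega] using this)]

lemma mP_rev (b c : ℕ → ℤ) : ∀ n k i, (∀ j, j < n → c (k + j) = b (i + (n - 1 - j))) →
    mP c k n = (mP b i n).rev := by
  intro n
  induction n with
  | zero => intros; simp [mP, M2.rev_I2]
  | succ n ih =>
    intro k i h
    have h0 : c k = b (i + n) := by simpa using h 0 (by omega)
    show (mOf (c k)).mul (mP c (k + 1) n) = _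
    rw [mP_succ, M2.rev_mul, M2.rev_mOf, h0]
    congr 1
    refine ih (k + 1) i (fun j hj => ?_)
    have := h (j + 1) (by omega)
    simpa [show k + (j + 1) = k + 1 + j from by omega,
      show n + 1 - 1 - (j + 1) = n - 1 - j from by omega,
      show n - (j + 1) = n - 1 - j from by omega] using this

lemma det1 (b : ℕ → ℤ) : ∀ n i, (mP b i n).a * (mP b i n).d - (mP b i n).b * (mP b i n).c = 1 := by
  intro n
  induction n with
  | zero => intro i; simp [mP, I2]
  | succ n ih =>
    intro i
    show ((mOf (b i)).mul (mP b (i + 1) n)).a * ((mOf (b i)).mul (mP b (i + 1) n)).d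
      - ((mOf (b i)).mul (mP b (i + 1) n)).b * ((mOf (b i)).mul (mP b (i + 1) n)).c = 1
    simp only [M2.mul_a, M2.mul_b, M2.mul_c, M2.mul_d, mOf_a, mOf_b, mOf_c, mOf_d]
    linear_combination ih (i + 1)

lemma grow (b : ℕ → ℤ) : ∀ n i, (∀ j, j < n + 1 → 2 ≤ b (i + j)) →
    0 < (mP b i (n + 1)).c ∧ (mP b i (n + 1)).c < (mP b i (n + 1)).a ∧
    0 ≤ -(mP b i (n + 1)).d ∧ -(mP b i (n + 1)).d ≤ -(mP b i (n + 1)).b ∧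
    -(mP b i (n + 1)).b < (mP b i (n + 1)).a ∧ -(mP b i (n + 1)).d < (mP b i (n + 1)).c ∧
    (mP b i (n + 1)).c + (mP b i (n + 1)).d ≤ (mP b i (n + 1)).a + (mP b i (n + 1)).b := by
  intro n
  induction n with
  | zero =>
    intro i h
    have hb : 2 ≤ b i := by simpa using h 0 (by omega)
    have h1 : mP b i 1 = mOf (b i) := by simp [mP, M2.mul_I2]
    rw [h1]
    simp only [mOf_a, mOf_b, mOf_c, mOf_d]
    omega
  | succ n ih =>
    intro i h
    have hb : 2 ≤ b i := by simpa using h 0 (by omega)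
    obtain ⟨g1, g2, g3, g4, g5, g6, g7⟩ := ih (i + 1) (fun j hj => by
      have := h (j + 1) (by omega)
      simpa [show i + (j + 1) = i + 1 + j from by omega] using this)
    have hstep : mP b i (n + 2) = (mOf (b i)).mul (mP b (i + 1) (n + 1)) := rfl
    set A := mP b (i + 1) (n + 1) with hA
    rw [hstep]
    simp only [M2.mul_a, M2.mul_b, M2.mul_c, M2.mul_d, mOf_a, mOf_b, mOf_c, mOf_d]
    have q1 : 0 ≤ (b i - 2) * A.a := mul_nonneg (by omega) (by linarith)
    have q2 : 0 ≤ (b i - 2) * (-A.b) := mul_nonneg (by omega) (by linarith)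
    have q3 : 0 ≤ (b i - 2) * (A.a + A.b) := mul_nonneg (by omega) (by linarith)
    refine ⟨by nlinarith, by nlinarith, by nlinarith, by nlinarith, by nlinarith,
      by nlinarith, by nlinarith⟩

lemma hjGe (b : ℕ → ℤ) : ∀ n i, 1 ≤ n → (∀ j, j < n → 2 ≤ b (i + j)) →
    1 < hjCF b i n ∧ hjWD b i n := by
  intro n
  induction n with
  | zero => intro i h; omega
  | succ n ih =>
    intro i _ h
    have hb : 2 ≤ b i := by simpa using h 0 (by omega)
    have hbq : (2 : ℚ) ≤ (b i : ℚ) := by exact_mod_cast hb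
    rcases Nat.eq_zero_or_pos n with rfl | hn
    · constructor
      · show (1 : ℚ) < (b i : ℚ) - (hjCF b (i + 1) 0)⁻¹
        simp only [hjCF]
        norm_num
        linarith
      · exact ⟨Or.inl rfl, trivial⟩
    · obtain ⟨ht, hw⟩ := ih (i + 1) hn (fun j hj => by
        have := h (j + 1) (by omega)
        simpa [show i + (j + 1) = i + 1 + j from by omega] using this)
      have hpos : 0 < hjCF b (i + 1) n := lt_trans one_pos ht
      have ht0 : hjCF b (i + 1) n ≠ 0 := ne_of_gt hpos
      constructor
      · show (1 : ℚ) < (b i : ℚ) - (hjCF b (i + 1) n)⁻¹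
        have h1 : (1 : ℚ) / (hjCF b (i + 1) n) < 1 := (div_lt_one hpos).mpr ht
        rw [one_div] at h1
        have h2 : 0 < (hjCF b (i + 1) n)⁻¹ := inv_pos.mpr hpos
        linarith
      · exact ⟨Or.inr ht0, hw⟩

lemma hj_val (b : ℕ → ℤ) : ∀ n i, hjWD b i (n + 1) →
    (mP b i (n + 1)).c ≠ 0 ∧
    hjCF b i (n + 1) = ((mP b i (n + 1)).a : ℚ) / ((mP b i (n + 1)).c : ℚ) := by
  intro n
  induction n with
  | zero =>
    intro i _
    have h1 : mP b i 1 = mOf (b i) := by simp [mP, M2.mul_I2]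
    rw [h1]
    refine ⟨by simp, ?_⟩
    show (b i : ℚ) - (hjCF b (i + 1) 0)⁻¹ = _
    simp [hjCF, mOf]
  | succ n ih =>
    intro i hw
    obtain ⟨h1, h2⟩ := hw
    have h1' : hjCF b (i + 1) (n + 1) ≠ 0 := h1.resolve_left (by omega)
    obtain ⟨hc, hv⟩ := ih (i + 1) h2
    have hstep : mP b i (n + 2) = (mOf (b i)).mul (mP b (i + 1) (n + 1)) := rfl
    set A := mP b (i + 1) (n + 1) with hA
    have hcq : ((A.c : ℚ)) ≠ 0 := by exact_mod_cast hc
    have haq : ((A.a : ℚ)) ≠ 0 := by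
      intro h0
      apply h1'
      rw [hv, h0, zero_div]
    have ha : A.a ≠ 0 := by exact_mod_cast haq
    rw [hstep]
    simp only [M2.mul_a, M2.mul_c, mOf_a, mOf_b, mOf_c, mOf_d]
    constructor
    · intro h0; apply ha; omega
    · show (b i : ℚ) - (hjCF b (i + 1) (n + 1))⁻¹ = _
      rw [hv, inv_div]
      push_cast
      field_simp
      have e1 : (A.a : ℚ) * (A.a : ℚ)⁻¹ = 1 := mul_inv_cancel₀ haq
      linear_combination (-(b i : ℚ) * A.a + A.c) * e1

lemma frac_eq {P Q A B : ℤ} (hQ : 0 < Q) (hB : 0 < B)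
    (hPQ : IsCoprime P Q) (hAB : IsCoprime A B)
    (h : (P : ℚ) / (Q : ℚ) = (A : ℚ) / (B : ℚ)) : P = A ∧ Q = B := by
  have hQ' : ((Q : ℚ)) ≠ 0 := by exact_mod_cast hQ.ne'
  have hB' : ((B : ℚ)) ≠ 0 := by exact_mod_cast hB.ne'
  have hx : (P : ℚ) * B = A * Q := (div_eq_div_iff hQ' hB').mp h
  have hz : P * B = A * Q := by exact_mod_cast hx
  have h1 : Q ∣ B := hPQ.symm.dvd_of_dvd_mul_left ⟨A, by linarith⟩
  have h2 : B ∣ Q := hAB.symm.dvd_of_dvd_mul_left ⟨P, by linarith⟩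
  have hQB : Q = B := Int.dvd_antisymm hQ.le hB.le h1 h2
  have hPA : P = A := by
    rw [hQB] at hz
    exact mul_right_cancel₀ hB.ne' hz
  exact ⟨hPA, hQB⟩

set_option maxHeartbeats 1000000 in
theorem k2A_contraction_fraction (m₁ a₁ m₂ a₂ δ : ℤ) (s₁ s₂ : ℕ)
    (e f g : ℕ → ℤ)
    (hm₁ : 2 ≤ m₁) (ha₁ : 0 < a₁) (ham₁ : a₁ < m₁) (hgcd₁ : Int.gcd m₁ a₁ = 1)
    (hm₂ : 2 ≤ m₂) (ha₂ : 0 < a₂) (ham₂ : a₂ < m₂) (hgcd₂ : Int.gcd m₂ a₂ = 1)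
    (hs₁ : 1 ≤ s₁) (hs₂ : 1 ≤ s₂)
    (he : ∀ j, 1 ≤ j → j ≤ s₁ → 2 ≤ e j) (hf : ∀ j, 1 ≤ j → j ≤ s₂ → 2 ≤ f j)
    (hexpe : hjCF e 1 s₁ = (m₁ : ℚ) ^ 2 / ((m₁ : ℚ) * (a₁ : ℚ) - 1))
    (hexpf : hjCF f 1 s₂ = (m₂ : ℚ) ^ 2 / ((m₂ : ℚ) * (a₂ : ℚ) - 1))
    (hδdef : δ = m₁ * a₂ + m₂ * a₁ - m₁ * m₂) (hδ : 0 < δ)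
    (hg : ∀ j, g j = if j ≤ s₂ then f (s₂ + 1 - j)
      else if j = s₂ + 1 then 1 else e (j - (s₂ + 1)))
    (hwd : hjWD g 1 (s₂ + 1 + s₁)) :
    hjCF g 1 (s₂ + 1 + s₁) =
      ((m₁ ^ 2 + m₂ ^ 2 - δ * m₁ * m₂ : ℤ) : ℚ) /
      (((m₂ - δ * m₁) * (m₂ - a₂) + m₁ * a₁ - 1 : ℤ) : ℚ) := by
  subst hδdef
  obtain ⟨n₁, rfl⟩ : ∃ k, s₁ = k + 1 := ⟨s₁ - 1, by omega⟩
  obtain ⟨n₂, rfl⟩ : ∃ k, s₂ = k + 1 := ⟨s₂ - 1, by omega⟩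
  have he2 : ∀ j, j < n₁ + 1 → 2 ≤ e (1 + j) := fun j hj => he (1 + j) (by omega) (by omega)
  have hf2 : ∀ j, j < n₂ + 1 → 2 ≤ f (1 + j) := fun j hj => hf (1 + j) (by omega) (by omega)
  obtain ⟨-, hwde⟩ := hjGe e (n₁ + 1) 1 (by omega) he2
  obtain ⟨-, hwdf⟩ := hjGe f (n₂ + 1) 1 (by omega) hf2
  obtain ⟨hEc0, hEval⟩ := hj_val e n₁ 1 hwde
  obtain ⟨hFc0, hFval⟩ := hj_val f n₂ 1 hwdf
  obtain ⟨gE1, gE2, -, -, -, -, -⟩ := grow e n₁ 1 he2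
  obtain ⟨gF1, gF2, gF3, gF4, gF5, -, -⟩ := grow f n₂ 1 hf2
  have hdetE := det1 e (n₁ + 1) 1
  have hdetF := det1 f (n₂ + 1) 1
  set E := mP e 1 (n₁ + 1) with hEdef
  set F := mP f 1 (n₂ + 1) with hFdef
  clear_value E F
  have hcopE : IsCoprime E.a E.c := ⟨E.d, -E.b, by linear_combination hdetE⟩
  have hcopF : IsCoprime F.a F.c := ⟨F.d, -F.b, by linear_combination hdetF⟩
  have cop1 : IsCoprime (m₁ ^ 2) (m₁ * a₁ - 1) :=
    IsCoprime.pow_left ⟨a₁, -1, by ring⟩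
  have cop2 : IsCoprime (m₂ ^ 2) (m₂ * a₂ - 1) :=
    IsCoprime.pow_left ⟨a₂, -1, by ring⟩
  have hq1 : (0 : ℤ) < m₁ * a₁ - 1 := by nlinarith
  have hq2 : (0 : ℤ) < m₂ * a₂ - 1 := by nlinarith
  have hE : E.a = m₁ ^ 2 ∧ E.c = m₁ * a₁ - 1 := by
    refine frac_eq gE1 hq1 hcopE cop1 ?_
    push_cast
    rw [← hEval]
    exact hexpe
  have hF : F.a = m₂ ^ 2 ∧ F.c = m₂ * a₂ - 1 := by
    refine frac_eq gF1 hq2 hcopF cop2 ?_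
    push_cast
    rw [← hFval]
    exact hexpf
  obtain ⟨hEa, hEc⟩ := hE
  obtain ⟨hFa, hFc⟩ := hF
  -- pin down the other two entries of F
  have hFa0 : (0 : ℤ) < F.a := lt_trans gF1 gF2
  have hid : F.a * (1 + a₂ ^ 2 - m₂ * a₂) - (m₂ * a₂ + 1 - m₂ ^ 2) * F.c = 1 := by
    rw [hFa, hFc]; ring
  have hdvd : F.a ∣ (F.b - (m₂ * a₂ + 1 - m₂ ^ 2)) := by
    have h1 : F.a * (F.d - (1 + a₂ ^ 2 - m₂ * a₂))
        = (F.b - (m₂ * a₂ + 1 - m₂ ^ 2)) * F.c := by linear_combination hdetF - hid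
    exact hcopF.dvd_of_dvd_mul_right ⟨F.d - (1 + a₂ ^ 2 - m₂ * a₂), h1.symm⟩
  have hX0a : -F.a < m₂ * a₂ + 1 - m₂ ^ 2 := by rw [hFa]; nlinarith
  have hX0b : m₂ * a₂ + 1 - m₂ ^ 2 < 0 := by
    have h1 : m₂ * a₂ ≤ m₂ * (m₂ - 1) :=
      mul_le_mul_of_nonneg_left (show a₂ ≤ m₂ - 1 by omega) (show (0:ℤ) ≤ m₂ by omega)
    have h2 : m₂ * (m₂ - 1) = m₂ ^ 2 - m₂ := by ring
    linarith
  have hFb : F.b = m₂ * a₂ + 1 - m₂ ^ 2 := by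
    obtain ⟨k, hk⟩ := hdvd
    have hb1 : F.b ≤ 0 := by linarith [le_trans gF3 gF4]
    have hb2 : -F.a < F.b := by linarith [gF5]
    rcases lt_trichotomy k 0 with hk0 | hk0 | hk0
    · have : F.a * k ≤ F.a * (-1) := mul_le_mul_of_nonneg_left (by omega) hFa0.le
      nlinarith
    · rw [hk0, mul_zero] at hk; linarith
    · have : F.a * 1 ≤ F.a * k := mul_le_mul_of_nonneg_left (by omega) hFa0.le
      nlinarith
  have hFd : F.d = 1 + a₂ ^ 2 - m₂ * a₂ := by
    have h1 : F.a * F.d = F.a * (1 + a₂ ^ 2 - m₂ * a₂) := by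
      linear_combination hdetF - hid + F.c * hFb
    exact mul_left_cancel₀ hFa0.ne' h1
  -- decompose the matrix of g
  have hmid : mP g (1 + (n₂ + 1)) 1 = mOf 1 := by
    have h1 : mP g (1 + (n₂ + 1)) 1 = mOf (g (1 + (n₂ + 1))) := by simp [mP, M2.mul_I2]
    rw [h1, hg (1 + (n₂ + 1)), if_neg (by omega), if_pos (by omega)]
  have htail : mP g (1 + (n₂ + 1) + 1) (n₁ + 1) = E := by
    rw [hEdef]
    refine (mP_congr g e (n₁ + 1) (1 + (n₂ + 1) + 1) 1 (fun j hj => ?_))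
    rw [hg, if_neg (by omega), if_neg (by omega)]
    congr 1
    omega
  have hhead : mP g 1 (n₂ + 1) = F.rev := by
    rw [hFdef]
    refine mP_rev f g (n₂ + 1) 1 1 (fun j hj => ?_)
    rw [hg, if_pos (by omega)]
    congr 1
    omega
  have hGfull : mP g 1 (n₂ + 1 + 1 + (n₁ + 1)) = ((F.rev).mul (mOf 1)).mul E := by
    rw [mP_add g (n₂ + 1 + 1) (n₁ + 1) 1, mP_add g (n₂ + 1) 1 1]
    have hix : 1 + (n₂ + 1 + 1) = 1 + (n₂ + 1) + 1 := by omega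
    rw [hix, hhead, hmid, htail]
  have hGa : (mP g 1 (n₂ + 1 + 1 + (n₁ + 1))).a
      = m₁ ^ 2 + m₂ ^ 2 - (m₁ * a₂ + m₂ * a₁ - m₁ * m₂) * m₁ * m₂ := by
    rw [hGfull]
    simp only [M2.mul_a, M2.mul_b, M2.mul_c, M2.mul_d, M2.rev_a, M2.rev_b, M2.rev_c,
      M2.rev_d, mOf_a, mOf_b, mOf_c, mOf_d]
    rw [hEa, hEc, hFa, hFc]
    ring
  have hGc : (mP g 1 (n₂ + 1 + 1 + (n₁ + 1))).c
      = (m₂ - (m₁ * a₂ + m₂ * a₁ - m₁ * m₂) * m₁) * (m₂ - a₂) + m₁ * a₁ - 1 := by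
    rw [hGfull]
    simp only [M2.mul_a, M2.mul_b, M2.mul_c, M2.mul_d, M2.rev_a, M2.rev_b, M2.rev_c,
      M2.rev_d, mOf_a, mOf_b, mOf_c, mOf_d]
    rw [hEa, hEc, hFb, hFd]
    ring
  obtain ⟨hGc0, hGval⟩ := hj_val g (n₂ + 1 + 1 + n₁) 1 (by
    rw [show n₂ + 1 + 1 + n₁ + 1 = n₂ + 1 + 1 + (n₁ + 1) from by omega]; exact hwd)
  have hGval' : hjCF g 1 (n₂ + 1 + 1 + (n₁ + 1))
      = ((mP g 1 (n₂ + 1 + 1 + (n₁ + 1))).a : ℚ) / ((mP g 1 (n₂ + 1 + 1 + (n₁ + 1))).c : ℚ) := by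
    rw [show n₂ + 1 + 1 + (n₁ + 1) = n₂ + 1 + 1 + n₁ + 1 from by omega]
    exact hGval
  have hfinal : ((mP g 1 (n₂ + 1 + 1 + (n₁ + 1))).a : ℚ)
      / ((mP g 1 (n₂ + 1 + 1 + (n₁ + 1))).c : ℚ)
      = ((m₁ ^ 2 + m₂ ^ 2 - (m₁ * a₂ + m₂ * a₁ - m₁ * m₂) * m₁ * m₂ : ℤ) : ℚ) /
        (((m₂ - (m₁ * a₂ + m₂ * a₁ - m₁ * m₂) * m₁) * (m₂ - a₂) + m₁ * a₁ - 1 : ℤ) : ℚ) := by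
    rw [hGa, hGc]
  exact hGval'.trans hfinal
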